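/- For fixed constants w > 0 and 0 < p < 1, define the threshold δ = (2w(1-p))^{1/(2-p)} + w·p·(2w(1-p))^{(p-1)/(2-p)}. If |s| ≤ δ, then x = 0 minimizes the function f(x) = w|x|^p + (1/2)(x - s)^2 over all real x. -/

import Mathlib

lemma gst_key (w p : ℝ) (hw : 0 < w) (hp0 : 0 < p) (hp1 : p < 1) (t : ℝ) (ht : 0 < t) :
    ((2 * w * (1 - p)) ^ ((1 : ℝ) / (2 - p))
        + w * p * (2 * w * (1 - p)) ^ ((p - 1) / (2 - p))) * t
      ≤ w * t ^ p + t ^ 2 / 2 := by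
  have hq : (0:ℝ) < 2 - p := by linarith
  have h1p : (0:ℝ) < 1 - p := by linarith
  have hB : (0:ℝ) < 2 * w * (1 - p) := by positivity
  have hw1 : (0:ℝ) ≤ 1 / (2 - p) := by positivity
  have hw2 : (0:ℝ) ≤ (1 - p) / (2 - p) := by positivity
  have hsum : 1 / (2 - p) + (1 - p) / (2 - p) = 1 := by field_simp; ring
  have htp : (0:ℝ) < t ^ p := Real.rpow_pos_of_pos ht p
  have hp1' : (0:ℝ) < (2 - p) * (w * t ^ p) := by positivity
  have hp2' : (0:ℝ) < ((2 - p) / (1 - p)) * (t ^ 2 / 2) := by positivity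
  have hgm := Real.geom_mean_le_arith_mean2_weighted hw1 hw2 hp1'.le hp2'.le hsum
  have harith : (1 / (2 - p)) * ((2 - p) * (w * t ^ p))
      + ((1 - p) / (2 - p)) * (((2 - p) / (1 - p)) * (t ^ 2 / 2))
      = w * t ^ p + t ^ 2 / 2 := by
    field_simp
  -- rewrite δ as a single product
  have hδ : (2 * w * (1 - p)) ^ ((1 : ℝ) / (2 - p))
        + w * p * (2 * w * (1 - p)) ^ ((p - 1) / (2 - p))
      = w * (2 - p) * (2 * w * (1 - p)) ^ ((p - 1) / (2 - p)) := by
    have h1 : (1:ℝ) / (2 - p) = 1 + (p - 1) / (2 - p) := by field_simp; ring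
    rw [h1, Real.rpow_add hB, Real.rpow_one]
    ring
  -- show the geometric mean equals δ * t by comparing logs
  have hGMpos : (0:ℝ) < ((2 - p) * (w * t ^ p)) ^ (1 / (2 - p))
      * (((2 - p) / (1 - p)) * (t ^ 2 / 2)) ^ ((1 - p) / (2 - p)) := by
    positivity
  have hRpos : (0:ℝ) < w * (2 - p) * (2 * w * (1 - p)) ^ ((p - 1) / (2 - p)) * t := by
    positivity
  have hlog : Real.log (((2 - p) * (w * t ^ p)) ^ (1 / (2 - p))
      * (((2 - p) / (1 - p)) * (t ^ 2 / 2)) ^ ((1 - p) / (2 - p)))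
      = Real.log (w * (2 - p) * (2 * w * (1 - p)) ^ ((p - 1) / (2 - p)) * t) := by
    rw [Real.log_mul (by positivity) (by positivity),
        Real.log_rpow hp1', Real.log_rpow hp2',
        Real.log_mul hq.ne' (by positivity),
        Real.log_mul hw.ne' htp.ne',
        Real.log_mul (by positivity) (by positivity),
        Real.log_div hq.ne' h1p.ne',
        Real.log_div (by positivity) (by norm_num : (2:ℝ) ≠ 0),
        Real.log_mul (by positivity) ht.ne',
        Real.log_mul (by positivity) (by positivity),
        Real.log_mul hw.ne' hq.ne',
        Real.log_rpow hB,
        Real.log_mul (by positivity) h1p.ne',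
        Real.log_mul (by norm_num : (2:ℝ) ≠ 0) hw.ne',
        Real.log_rpow ht, Real.log_pow]
    push_cast
    field_simp
    ring
  have hgeq : ((2 - p) * (w * t ^ p)) ^ (1 / (2 - p))
      * (((2 - p) / (1 - p)) * (t ^ 2 / 2)) ^ ((1 - p) / (2 - p))
      = w * (2 - p) * (2 * w * (1 - p)) ^ ((p - 1) / (2 - p)) * t := by
    rw [← Real.exp_log hGMpos, ← Real.exp_log hRpos, hlog]
  rw [hδ]
  calc w * (2 - p) * (2 * w * (1 - p)) ^ ((p - 1) / (2 - p)) * t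
      = ((2 - p) * (w * t ^ p)) ^ (1 / (2 - p))
        * (((2 - p) / (1 - p)) * (t ^ 2 / 2)) ^ ((1 - p) / (2 - p)) := hgeq.symm
    _ ≤ (1 / (2 - p)) * ((2 - p) * (w * t ^ p))
        + ((1 - p) / (2 - p)) * (((2 - p) / (1 - p)) * (t ^ 2 / 2)) := hgm
    _ = w * t ^ p + t ^ 2 / 2 := harith

/-- Zero-branch of the generalized soft-thresholding operator:
if `|s| ≤ δ` then `x = 0` minimizes `f(x) = w|x|^p + (1/2)(x-s)^2`. -/
theorem gst_zero_branch (w p s : ℝ) (hw : 0 < w) (hp0 : 0 < p) (hp1 : p < 1)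
    (hs : |s| ≤ (2 * w * (1 - p)) ^ ((1 : ℝ) / (2 - p))
        + w * p * (2 * w * (1 - p)) ^ ((p - 1) / (2 - p))) :
    ∀ x : ℝ, w * |(0 : ℝ)| ^ p + (1 / 2) * ((0 : ℝ) - s) ^ 2
      ≤ w * |x| ^ p + (1 / 2) * (x - s) ^ 2 := by
  intro x
  rw [abs_zero, Real.zero_rpow hp0.ne', mul_zero]
  rcases eq_or_ne x 0 with rfl | hx
  · simp [Real.zero_rpow hp0.ne']
  have ht : 0 < |x| := abs_pos.mpr hx
  have key := gst_key w p hw hp0 hp1 |x| ht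
  have hsx : s * x ≤ |s| * |x| := by
    calc s * x ≤ |s * x| := le_abs_self _
      _ = |s| * |x| := abs_mul s x
  have h2 : |s| * |x| ≤ ((2 * w * (1 - p)) ^ ((1 : ℝ) / (2 - p))
        + w * p * (2 * w * (1 - p)) ^ ((p - 1) / (2 - p))) * |x| :=
    mul_le_mul_of_nonneg_right hs ht.le
  have hx2 : |x| ^ 2 = x ^ 2 := sq_abs x
  nlinarith [key, hsx, h2, hx2]
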